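/- Let U ⊆ V and i ∈ V. (a) If i ∈ U, then An_low^U(i) = De_high^U(i) = {i}. (b) If i ∉ U, then An_low^U(i) = { j ∈ an(i)∩U : b_{ji} > max_{k ∈ de(j)∩U∩an(i)} b_{jk} b_{ki} / b_{kk} } and De_high^U(i) = { l ∈ de(i)∩U : b_{il} > max_{k ∈ de(i)∩U∩an(l)} b_{ik} b_{kl} / b_{kk} } (maxima over the empty set are 0). -/

import Mathlib

open scoped NNReal ENNReal Classical

namespace MaxLinearDAG

variable {d : ℕ}

/-- `p` is a directed path (with at least one edge) from `j` to `i` in the edge relation `E`. -/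
def PathFrom (E : Fin d → Fin d → Prop) (j i : Fin d) (p : List (Fin d)) : Prop :=
  2 ≤ p.length ∧ p.head? = some j ∧ p.getLast? = some i ∧ List.Chain' E p

/-- The directed graph given by `E` is acyclic: no directed path from a node to itself. -/
def Acyclic (E : Fin d → Fin d → Prop) : Prop :=
  ∀ i, ¬ ∃ p, PathFrom E i i p

/-- `j` is an ancestor of `i`: there is a path from `j` to `i`. -/
def anc (E : Fin d → Fin d → Prop) (j i : Fin d) : Prop :=
  ∃ p, PathFrom E j i p

/-- The weight of a path `p` starting at `j`: `c j j` times the product of the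
edge weights along `p`. -/
noncomputable def pathWeight (c : Fin d → Fin d → ℝ≥0) (j : Fin d) (p : List (Fin d)) : ℝ≥0 :=
  c j j * ((p.zip p.tail).map fun q => c q.1 q.2).prod

/-- `b` is the max-linear coefficient matrix of the recursive ML model on `(E, c)`:
for `j ∈ an(i)`, `b j i` is the (attained) maximum of the path weights over all paths
from `j` to `i`; `b i i = c i i`; and `b j i = 0` for `j ∉ An(i)`. -/
def IsMLMatrix (E : Fin d → Fin d → Prop) (c b : Fin d → Fin d → ℝ≥0) : Prop :=
  (∀ i, b i i = c i i) ∧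
  (∀ j i, j ≠ i → ¬ anc E j i → b j i = 0) ∧
  (∀ j i p, PathFrom E j i p → pathWeight c j p ≤ b j i) ∧
  (∀ j i, anc E j i → ∃ p, PathFrom E j i p ∧ pathWeight c j p = b j i)

/-- `x` is the vector of recursive max-linear values on `(E, c)` for noise `z`:
`x i = max (max_{k ∈ pa(i)} c k i * x k) (c i i * z i)`, empty max being `0`. -/
def IsRecML (E : Fin d → Fin d → Prop) (c : Fin d → Fin d → ℝ≥0) (z x : Fin d → ℝ≥0) : Prop :=
  ∀ i, x i = (Finset.univ.sup fun k => if E k i then c k i * x k else 0) ⊔ c i i * z i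

/-- Max-times matrix product `F ⊙ G`. -/
noncomputable def mprod (F G : Fin d → Fin d → ℝ≥0) : Fin d → Fin d → ℝ≥0 :=
  fun i j => Finset.univ.sup fun k => F i k * G k j

/-- Max-times matrix power, `mpow A 0` being the identity matrix. -/
noncomputable def mpow (A : Fin d → Fin d → ℝ≥0) : ℕ → Fin d → Fin d → ℝ≥0
  | 0 => fun i j => if i = j then 1 else 0
  | n + 1 => mprod (mpow A n) A

/-- `p` is a max-weighted path from `j` to `i`. -/
def MaxWeighted (E : Fin d → Fin d → Prop) (c b : Fin d → Fin d → ℝ≥0)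
    (j i : Fin d) (p : List (Fin d)) : Prop :=
  PathFrom E j i p ∧ pathWeight c j p = b j i

/-- The lowest max-weighted ancestors of `i` in `U`: nodes `j ∈ An(i) ∩ U` such that no
max-weighted path from `j` to `i` passes through a node of `U \ {j}`. -/
def AnLow (E : Fin d → Fin d → Prop) (c b : Fin d → Fin d → ℝ≥0)
    (U : Set (Fin d)) (i : Fin d) : Set (Fin d) :=
  {j | (anc E j i ∨ j = i) ∧ j ∈ U ∧
    ∀ p, MaxWeighted E c b j i p → ¬ ∃ u ∈ U \ {j}, u ∈ p}

/-- The highest max-weighted descendants of `i` in `U`: nodes `l ∈ De(i) ∩ U` such that no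
max-weighted path from `i` to `l` passes through a node of `U \ {l}`. -/
def DeHigh (E : Fin d → Fin d → Prop) (c b : Fin d → Fin d → ℝ≥0)
    (U : Set (Fin d)) (i : Fin d) : Set (Fin d) :=
  {l | (anc E i l ∨ l = i) ∧ l ∈ U ∧
    ∀ p, MaxWeighted E c b i l p → ¬ ∃ u ∈ U \ {l}, u ∈ p}

-- ===== auxiliary material =====

/-- Product of edge weights along a list. -/
noncomputable def ew (c : Fin d → Fin d → ℝ≥0) (p : List (Fin d)) : ℝ≥0 :=
  ((p.zip p.tail).map fun q => c q.1 q.2).prod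

lemma pathWeight_eq_ew (c : Fin d → Fin d → ℝ≥0) (j : Fin d) (p : List (Fin d)) :
    pathWeight c j p = c j j * ew c p := rfl

lemma ew_nil (c : Fin d → Fin d → ℝ≥0) : ew c [] = 1 := rfl

lemma ew_single (c : Fin d → Fin d → ℝ≥0) (a : Fin d) : ew c [a] = 1 := rfl

lemma ew_cons_cons (c : Fin d → Fin d → ℝ≥0) (a b : Fin d) (l : List (Fin d)) :
    ew c (a :: b :: l) = c a b * ew c (b :: l) := by
  simp [ew]

lemma ew_append (c : Fin d → Fin d → ℝ≥0) (u : Fin d) :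
    ∀ (p1 : List (Fin d)), p1 ≠ [] → ∀ p2,
      ew c (p1 ++ u :: p2) = ew c (p1 ++ [u]) * ew c (u :: p2)
  | [], h, _ => absurd rfl h
  | [a], _, p2 => by
      simp [ew_cons_cons, ew_single, ew_nil]
  | a :: a2 :: t, _, p2 => by
      have ih := ew_append c u (a2 :: t) (by simp) p2
      simp only [List.cons_append, ew_cons_cons] at *
      rw [ih]; ring

lemma ew_pos {E : Fin d → Fin d → Prop} {c : Fin d → Fin d → ℝ≥0}
    (hce : ∀ k i, E k i → 0 < c k i) :
    ∀ {p : List (Fin d)}, List.Chain' E p → 0 < ew c p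
  | [], _ => by simp [ew_nil]
  | [a], _ => by simp [ew_single]
  | a :: b :: l, h => by
      simp only [List.Chain', List.isChain_cons_cons] at h
      rw [ew_cons_cons]
      exact mul_pos (hce _ _ h.1) (ew_pos hce h.2)

lemma PathFrom.source_mem {E : Fin d → Fin d → Prop} {j i : Fin d} {p : List (Fin d)}
    (h : PathFrom E j i p) : j ∈ p := by
  rcases p with _ | ⟨a, t⟩
  · exact absurd h.2.1 (by simp)
  · have : a = j := by simpa using h.2.1
    simp [this]

lemma PathFrom.target_mem {E : Fin d → Fin d → Prop} {j i : Fin d} {p : List (Fin d)}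
    (h : PathFrom E j i p) : i ∈ p :=
  List.mem_of_getLast? h.2.2.1

lemma anc_ne {E : Fin d → Fin d → Prop} (hE : Acyclic E) {j i : Fin d} (h : anc E j i) :
    j ≠ i := by
  rintro rfl
  exact hE j h

/-- Concatenation of two paths. -/
lemma pathFrom_append {E : Fin d → Fin d → Prop} (c : Fin d → Fin d → ℝ≥0)
    {j k i : Fin d} {p q : List (Fin d)}
    (hp : PathFrom E j k p) (hq : PathFrom E k i q) :
    PathFrom E j i (p ++ q.tail) ∧ ew c (p ++ q.tail) = ew c p * ew c q := by
  obtain ⟨hpl, hph, hpt, hpc⟩ := hp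
  obtain ⟨hql, hqh, hqt, hqc⟩ := hq
  obtain ⟨p', rfl⟩ : ∃ p', p = p' ++ [k] := List.getLast?_eq_some_iff.1 hpt
  have hp' : p' ≠ [] := by
    rintro rfl; simp at hpl
  obtain ⟨q', rfl⟩ : ∃ q', q = k :: q' := by
    rcases q with _ | ⟨qh, q'⟩
    · simp at hqh
    · have : qh = k := by simpa using hqh
      exact ⟨q', by rw [this]⟩
  have hq' : q' ≠ [] := by
    rintro rfl; simp at hql
  have heq : (p' ++ [k]) ++ (k :: q').tail = p' ++ k :: q' := by simp
  rw [heq]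
  have hsplit : List.Chain' E (p' ++ k :: q') :=
    List.isChain_split.2 ⟨hpc, hqc⟩
  refine ⟨⟨?_, ?_, ?_, hsplit⟩, ?_⟩
  · rcases p' with _ | ⟨a, t⟩
    · exact absurd rfl hp'
    · simp only [List.cons_append, List.length_cons, List.length_append]; omega
  · rw [List.head?_append_of_ne_nil _ hp'] at hph ⊢
    exact hph
  · rw [List.getLast?_append_of_ne_nil _ (by simp : (k :: q') ≠ [])]
    exact hqt
  · rw [ew_append c k p' hp' q']

/-- Splitting a path at an interior node. -/
lemma pathFrom_split {E : Fin d → Fin d → Prop} (c : Fin d → Fin d → ℝ≥0)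
    {j i u : Fin d} {p : List (Fin d)}
    (hp : PathFrom E j i p) (hu : u ∈ p) (huj : u ≠ j) (hui : u ≠ i) :
    ∃ p1 p2, PathFrom E j u p1 ∧ PathFrom E u i p2 ∧ ew c p = ew c p1 * ew c p2 := by
  obtain ⟨s, t, rfl⟩ := List.append_of_mem hu
  obtain ⟨hpl, hph, hpt, hpc⟩ := hp
  have hs : s ≠ [] := by
    rintro rfl
    exact huj (by simpa using hph)
  have ht : t ≠ [] := by
    rintro rfl
    rw [List.getLast?_append_of_ne_nil _ (by simp : [u] ≠ ([] : List (Fin d)))] at hpt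
    exact hui (by simpa using hpt)
  have hchain := List.isChain_split.1 hpc
  refine ⟨s ++ [u], u :: t, ⟨?_, ?_, ?_, hchain.1⟩, ⟨?_, ?_, ?_, hchain.2⟩, ?_⟩
  · rcases s with _ | ⟨a, t'⟩
    · exact absurd rfl hs
    · simp only [List.cons_append, List.length_cons, List.length_append]; omega
  · rw [List.head?_append_of_ne_nil _ hs]
    rw [List.head?_append_of_ne_nil _ hs] at hph
    exact hph
  · rw [List.getLast?_append_of_ne_nil _ (by simp : [u] ≠ ([] : List (Fin d)))]
    simp
  · rcases t with _ | ⟨a, t'⟩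
    · exact absurd rfl ht
    · simp only [List.length_cons]; omega
  · simp
  · rw [List.getLast?_append_of_ne_nil _ (by simp [ht] : u :: t ≠ [])] at hpt
    simpa [ht] using hpt
  · exact ew_append c u s hs t

variable {E : Fin d → Fin d → Prop} {c b : Fin d → Fin d → ℝ≥0}

lemma b_pos (hcd : ∀ i, 0 < c i i) (hce : ∀ k i, E k i → 0 < c k i)
    (hb : IsMLMatrix E c b) {j i : Fin d} (h : anc E j i) : 0 < b j i := by
  obtain ⟨p, hp, hw⟩ := hb.2.2.2 j i h
  rw [← hw, pathWeight_eq_ew]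
  exact mul_pos (hcd j) (ew_pos hce hp.2.2.2)

/-- Upper bound: `b j u * b u i ≤ b j i * c u u`. -/
lemma L1 (hb : IsMLMatrix E c b) {j u i : Fin d} (h1 : anc E j u) (h2 : anc E u i) :
    b j u * b u i ≤ b j i * c u u := by
  obtain ⟨p, hp, hwp⟩ := hb.2.2.2 j u h1
  obtain ⟨q, hq, hwq⟩ := hb.2.2.2 u i h2
  obtain ⟨hr, hew⟩ := pathFrom_append c hp hq
  have hle := hb.2.2.1 j i _ hr
  rw [pathWeight_eq_ew, hew] at hle
  calc b j u * b u i = (c j j * ew c p) * (c u u * ew c q) := by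
        rw [← hwp, ← hwq, pathWeight_eq_ew, pathWeight_eq_ew]
    _ = (c j j * (ew c p * ew c q)) * c u u := by ring
    _ ≤ b j i * c u u := by exact mul_le_mul_left hle _


/-- Splitting a max-weighted path at an interior node yields equality. -/
lemma L2 (hb : IsMLMatrix E c b) {j u i : Fin d} {p : List (Fin d)}
    (hmw : MaxWeighted E c b j i p) (hu : u ∈ p) (huj : u ≠ j) (hui : u ≠ i) :
    anc E j u ∧ anc E u i ∧ b j u * b u i = b j i * c u u := by
  obtain ⟨p1, p2, h1, h2, hew⟩ := pathFrom_split c hmw.1 hu huj hui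
  refine ⟨⟨p1, h1⟩, ⟨p2, h2⟩, le_antisymm (L1 hb ⟨p1, h1⟩ ⟨p2, h2⟩) ?_⟩
  have hle1 := hb.2.2.1 j u p1 h1
  have hle2 := hb.2.2.1 u i p2 h2
  calc b j i * c u u = (c j j * ew c p) * c u u := by rw [← hmw.2, pathWeight_eq_ew]
    _ = (c j j * ew c p1) * (c u u * ew c p2) := by rw [hew]; ring
    _ ≤ b j u * b u i := by
        exact mul_le_mul' (by rw [pathWeight_eq_ew] at hle1; exact hle1)
          (by rw [pathWeight_eq_ew] at hle2; exact hle2)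

/-- Constructing a max-weighted path through `u` from the equality case. -/
lemma L3 (hcd : ∀ i, 0 < c i i) (hb : IsMLMatrix E c b) {j u i : Fin d}
    (h1 : anc E j u) (h2 : anc E u i) (heq : b j u * b u i = b j i * c u u) :
    ∃ p, MaxWeighted E c b j i p ∧ u ∈ p := by
  obtain ⟨p, hp, hwp⟩ := hb.2.2.2 j u h1
  obtain ⟨q, hq, hwq⟩ := hb.2.2.2 u i h2
  obtain ⟨hr, hew⟩ := pathFrom_append c hp hq
  refine ⟨p ++ q.tail, ⟨hr, ?_⟩, List.mem_append_left _ hp.target_mem⟩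
  have hkey : pathWeight c j (p ++ q.tail) * c u u = b j i * c u u := by
    rw [pathWeight_eq_ew, hew, ← heq, ← hwp, ← hwq, pathWeight_eq_ew, pathWeight_eq_ew]
    ring
  exact mul_right_cancel₀ (hcd u).ne' hkey

/-- The key characterization of the "no node of `U` on a max-weighted path" condition. -/
lemma key (hE : Acyclic E) (hcd : ∀ i, 0 < c i i) (hce : ∀ k i, E k i → 0 < c k i)
    (hb : IsMLMatrix E c b) (U : Set (Fin d)) {s t w : Fin d}
    (hst : anc E s t) (hw : w = s ∨ w = t)
    (hside : ∀ u ∈ U, u ≠ w → u ≠ s ∧ u ≠ t) :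
    (∀ p, MaxWeighted E c b s t p → ¬ ∃ u ∈ U \ {w}, u ∈ p) ↔
      (Finset.univ.sup fun k =>
        if anc E s k ∧ k ∈ U ∧ anc E k t then b s k * b k t / b k k else 0) < b s t := by
  have hbst : 0 < b s t := b_pos hcd hce hb hst
  rw [Finset.sup_lt_iff (by exact hbst)]
  constructor
  · intro h k _
    split_ifs with hk
    · obtain ⟨hsk, hkU, hkt⟩ := hk
      have hkk : b k k = c k k := hb.1 k
      rw [hkk, div_lt_iff₀ (hcd k)]
      refine lt_of_le_of_ne (L1 hb hsk hkt) ?_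
      intro heq
      obtain ⟨p, hmw, hkp⟩ := L3 hcd hb hsk hkt heq
      have hkw : k ≠ w := by
        rcases hw with rfl | rfl
        · exact (anc_ne hE hsk).symm
        · exact anc_ne hE hkt
      exact h p hmw ⟨k, ⟨hkU, hkw⟩, hkp⟩
    · exact hbst
  · rintro h p hmw ⟨u, ⟨huU, huw⟩, hup⟩
    have huw' : u ≠ w := huw
    obtain ⟨hus, hut⟩ := hside u huU huw'
    obtain ⟨hsu, hut2, heq⟩ := L2 hb hmw hup hus hut
    have hu := h u (Finset.mem_univ u)
    rw [if_pos ⟨hsu, huU, hut2⟩] at hu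
    have hukk : b u u = c u u := hb.1 u
    have hdiv : b s u * b u t / b u u = b s t := by
      rw [hukk, div_eq_iff (hcd u).ne']
      exact heq
    rw [hdiv] at hu
    exact absurd hu (lt_irrefl _)


/-- Let `U ⊆ V` and `i ∈ V`.
(a) If `i ∈ U`, then `An_low^U(i) = De_high^U(i) = {i}`.
(b) If `i ∉ U`, then
`An_low^U(i) = {j ∈ an(i) ∩ U : b j i > max_{k ∈ de(j) ∩ U ∩ an(i)} b j k * b k i / b k k}` and
`De_high^U(i) = {l ∈ de(i) ∩ U : b i l > max_{k ∈ de(i) ∩ U ∩ an(l)} b i k * b k l / b k k}`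
(empty maxima being `0`). -/
theorem stmt15 {d : ℕ} (hd : 1 ≤ d) (E : Fin d → Fin d → Prop) (hE : Acyclic E)
    (c : Fin d → Fin d → ℝ≥0) (hcd : ∀ i, 0 < c i i) (hce : ∀ k i, E k i → 0 < c k i)
    (b : Fin d → Fin d → ℝ≥0) (hb : IsMLMatrix E c b)
    (U : Set (Fin d)) (i : Fin d) :
    (i ∈ U → AnLow E c b U i = {i} ∧ DeHigh E c b U i = {i}) ∧
    (i ∉ U →
      AnLow E c b U i = {j | anc E j i ∧ j ∈ U ∧
        (Finset.univ.sup fun k =>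
          if anc E j k ∧ k ∈ U ∧ anc E k i then b j k * b k i / b k k else 0) < b j i} ∧
      DeHigh E c b U i = {l | anc E i l ∧ l ∈ U ∧
        (Finset.univ.sup fun k =>
          if anc E i k ∧ k ∈ U ∧ anc E k l then b i k * b k l / b k k else 0) < b i l}) := by
  constructor
  · intro hiU
    constructor
    · ext j
      simp only [AnLow, Set.mem_setOf_eq, Set.mem_singleton_iff]
      constructor
      · rintro ⟨h1, hjU, h3⟩
        by_contra hji
        have hanc : anc E j i := h1.resolve_right hji
        obtain ⟨p, hp, hw⟩ := hb.2.2.2 j i hanc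
        exact h3 p ⟨hp, hw⟩ ⟨i, ⟨hiU, by simp [Ne.symm hji]⟩, hp.target_mem⟩
      · rintro rfl
        exact ⟨Or.inr rfl, hiU, fun p hmw => absurd ⟨p, hmw.1⟩ (hE _)⟩
    · ext l
      simp only [DeHigh, Set.mem_setOf_eq, Set.mem_singleton_iff]
      constructor
      · rintro ⟨h1, hlU, h3⟩
        by_contra hli
        have hanc : anc E i l := h1.resolve_right hli
        obtain ⟨p, hp, hw⟩ := hb.2.2.2 i l hanc
        exact h3 p ⟨hp, hw⟩ ⟨i, ⟨hiU, by simp [anc_ne hE hanc]⟩, hp.source_mem⟩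
      · rintro rfl
        exact ⟨Or.inr rfl, hiU, fun p hmw => absurd ⟨p, hmw.1⟩ (hE _)⟩
  · intro hiU
    constructor
    · ext j
      simp only [AnLow, Set.mem_setOf_eq]
      constructor
      · rintro ⟨h1, hjU, h3⟩
        have hji : j ≠ i := fun h => hiU (h ▸ hjU)
        have hanc := h1.resolve_right hji
        exact ⟨hanc, hjU,
          (key hE hcd hce hb U hanc (Or.inl rfl)
            (fun u huU huw => ⟨huw, fun h => hiU (h ▸ huU)⟩)).1 h3⟩
      · rintro ⟨hanc, hjU, hsup⟩
        exact ⟨Or.inl hanc, hjU,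
          (key hE hcd hce hb U hanc (Or.inl rfl)
            (fun u huU huw => ⟨huw, fun h => hiU (h ▸ huU)⟩)).2 hsup⟩
    · ext l
      simp only [DeHigh, Set.mem_setOf_eq]
      constructor
      · rintro ⟨h1, hlU, h3⟩
        have hli : l ≠ i := fun h => hiU (h ▸ hlU)
        have hanc := h1.resolve_right hli
        exact ⟨hanc, hlU,
          (key hE hcd hce hb U hanc (Or.inr rfl)
            (fun u huU huw => ⟨fun h => hiU (h ▸ huU), huw⟩)).1 h3⟩
      · rintro ⟨hanc, hlU, hsup⟩
        exact ⟨Or.inl hanc, hlU,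
          (key hE hcd hce hb U hanc (Or.inr rfl)
            (fun u huU huw => ⟨fun h => hiU (h ▸ huU), huw⟩)).2 hsup⟩
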